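/- arXiv:0801.2226 — 3 statements merged into one kernel-verified Lean document; each statement's English description precedes it below -/
import Mathlib

section
/- Every closed PGA term is derivably equal (using axioms PGA1–PGA4) to a term in canonical form, i.e., a term of the form P or P ; Q^ω where P and Q are closed PGA terms not containing the repetition operator. -/
/-- PGA terms: instruction constants, concatenation `;`, repetition `^ω`. -/
inductive PGA (I : Type) : Type
  | inst : I → PGA I
  | seq : PGA I → PGA I → PGA I
  | rep : PGA I → PGA I

namespace PGA

/-- `pow x n` denotes `x^(n+1)`. -/
def pow {I : Type} (x : PGA I) : ℕ → PGA I
  | 0 => x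
  | n + 1 => x.seq (x.pow n)

/-- Derivable equality of PGA terms: the congruence generated by PGA1–PGA4. -/
inductive Eq {I : Type} : PGA I → PGA I → Prop
  | refl (x : PGA I) : Eq x x
  | symm {x y : PGA I} : Eq x y → Eq y x
  | trans {x y z : PGA I} : Eq x y → Eq y z → Eq x z
  | seq_congr {x y x' y' : PGA I} : Eq x x' → Eq y y' → Eq (x.seq y) (x'.seq y')
  | rep_congr {x x' : PGA I} : Eq x x' → Eq x.rep x'.rep
  | pga1 (x y z : PGA I) : Eq ((x.seq y).seq z) (x.seq (y.seq z))
  | pga2 (x : PGA I) (n : ℕ) : Eq (x.pow n).rep x.rep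
  | pga3 (x y : PGA I) : Eq (x.rep.seq y) x.rep
  | pga4 (x y : PGA I) : Eq (x.seq y).rep (x.seq (y.seq x).rep)

/-- A PGA term not containing the repetition operator. -/
def repFree {I : Type} : PGA I → Prop
  | inst _ => True
  | seq x y => repFree x ∧ repFree y
  | rep _ => False

end PGA

/-- Every closed PGA term is derivably equal to a term in canonical form:
either a repetition-free term `P`, or `P ; Q^ω` with `P`, `Q` repetition-free. -/
theorem pga_canonical_form {I : Type} (x : PGA I) :
    (∃ P : PGA I, P.repFree ∧ PGA.Eq x P) ∨
    (∃ P Q : PGA I, P.repFree ∧ Q.repFree ∧ PGA.Eq x (P.seq Q.rep)) := by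
  have unfold : ∀ y : PGA I, PGA.Eq y.rep (y.seq y.rep) := fun y =>
    ((PGA.Eq.pga2 y 1).symm.trans (PGA.Eq.pga4 y y)).trans
      (PGA.Eq.seq_congr (PGA.Eq.refl y) (PGA.Eq.pga2 y 1))
  induction x with
  | inst i => exact Or.inl ⟨.inst i, trivial, .refl _⟩
  | seq a b iha ihb =>
    rcases iha with ⟨P, hP, hE⟩ | ⟨P, Q, hP, hQ, hE⟩
    · rcases ihb with ⟨R, hR, hE'⟩ | ⟨R, S, hR, hS, hE'⟩
      · exact Or.inl ⟨P.seq R, ⟨hP, hR⟩, .seq_congr hE hE'⟩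
      · exact Or.inr ⟨P.seq R, S, ⟨hP, hR⟩, hS,
          (PGA.Eq.seq_congr hE hE').trans (PGA.Eq.pga1 P R S.rep).symm⟩
    · exact Or.inr ⟨P, Q, hP, hQ,
        ((PGA.Eq.seq_congr hE (PGA.Eq.refl b)).trans (PGA.Eq.pga1 P Q.rep b)).trans
          (PGA.Eq.seq_congr (PGA.Eq.refl P) (PGA.Eq.pga3 Q b))⟩
  | rep a iha =>
    rcases iha with ⟨P, hP, hE⟩ | ⟨P, Q, hP, hQ, hE⟩
    · exact Or.inr ⟨P, P.seq P, hP, ⟨hP, hP⟩,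
        ((PGA.Eq.rep_congr hE).trans (PGA.Eq.pga2 P 1).symm).trans (PGA.Eq.pga4 P P)⟩
    · refine Or.inr ⟨P, Q, hP, hQ, ?_⟩
      set t := P.seq Q.rep with ht
      exact (((PGA.Eq.rep_congr hE).trans (unfold t)).trans
        (PGA.Eq.pga1 P Q.rep t.rep)).trans
        (PGA.Eq.seq_congr (PGA.Eq.refl P) (PGA.Eq.pga3 Q t.rep))
end

section
/- For any state-based service description (S, eff, yld, act) satisfying the three service-description conditions, each H_s (for s ∈ S) satisfies the three defining conditions on services; in particular: (1) if reply(H_s)(α ⌢ ⟨m⟩) = M for some α, then reply(H_s)(α' ⌢ ⟨m⟩) ∉ {T,F} for all α'; (2) if reply(H_s)(α) = B then reply(H_s)(α ⌢ ⟨m⟩) = B for all m; (3) reply(H_s)(α) ≠ M iff action(H_s)(α) = τ. -/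
/-- Possible replies of a service: true, false, no reply (`M`), blocked (`B`). -/
inductive Reply : Type
  | T | F | M | B

/-- The cumulative effect function: `ceff_s(⟨⟩) = s`,
`ceff_s(α ⌢ ⟨m⟩) = eff(m, ceff_s(α))`. -/
def ceff {Meth S : Type} (eff : Meth → S → S) (s : S) (α : List Meth) : S :=
  α.foldl (fun st m => eff m st) s

/-- Reply function of the service `H_s`: on a non-empty sequence `α ⌢ ⟨m⟩`
(encoded as a non-empty list) it is `yld(m, ceff_s(α))`; the value on the
empty list is irrelevant junk. -/
def HsReply {Meth S : Type} (eff : Meth → S → S) (yld : Meth → S → Reply)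
    (s : S) : List Meth → Reply
  | [] => Reply.B
  | (m :: rest) =>
      yld ((m :: rest).getLast (by simp)) (ceff eff s (m :: rest).dropLast)

/-- Action function of the service `H_s`. -/
def HsAction {Meth S Act : Type} (eff : Meth → S → S) (act : Meth → S → Act)
    (tau : Act) (s : S) : List Meth → Act
  | [] => tau
  | (m :: rest) =>
      act ((m :: rest).getLast (by simp)) (ceff eff s (m :: rest).dropLast)

lemma HsReply_concat {Meth S : Type} (eff : Meth → S → S) (yld : Meth → S → Reply)
    (s : S) (α : List Meth) (m : Meth) :
    HsReply eff yld s (α ++ [m]) = yld m (ceff eff s α) := by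
  have h : α ++ [m] ≠ [] := by simp
  obtain ⟨a, rest, he⟩ : ∃ a rest, α ++ [m] = a :: rest := by
    cases hh : α ++ [m] with
    | nil => exact absurd hh h
    | cons a rest => exact ⟨a, rest, rfl⟩
  rw [he, HsReply]
  simp [← he]

lemma HsAction_concat {Meth S Act : Type} (eff : Meth → S → S) (act : Meth → S → Act)
    (tau : Act) (s : S) (α : List Meth) (m : Meth) :
    HsAction eff act tau s (α ++ [m]) = act m (ceff eff s α) := by
  obtain ⟨a, rest, he⟩ : ∃ a rest, α ++ [m] = a :: rest := by
    cases hh : α ++ [m] with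
    | nil => simp at hh
    | cons a rest => exact ⟨a, rest, rfl⟩
  rw [he, HsAction]
  simp [← he]

/-- If a state-based service description `(S, eff, yld, act)` satisfies the three
service-description conditions, then each `H_s` satisfies the three defining
conditions on services. -/
theorem state_service_is_service {Meth S Act : Type}
    (eff : Meth → S → S) (yld : Meth → S → Reply) (act : Meth → S → Act)
    (tau : Act)
    (cond1 : ∀ m : Meth, (∃ s : S, yld m s = Reply.M) →
      ∀ s' : S, yld m s' ≠ Reply.T ∧ yld m s' ≠ Reply.F)
    (cond2 : ∃ d : S, (∀ m : Meth, yld m d = Reply.B) ∧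
      (∀ m : Meth, ∀ s' : S, yld m s' = Reply.B → eff m s' = d))
    (cond3 : ∀ (m : Meth) (s : S), yld m s ≠ Reply.M ↔ act m s = tau)
    (s : S) :
    (∀ m : Meth, (∃ α : List Meth, HsReply eff yld s (α ++ [m]) = Reply.M) →
      ∀ α' : List Meth, HsReply eff yld s (α' ++ [m]) ≠ Reply.T ∧
        HsReply eff yld s (α' ++ [m]) ≠ Reply.F) ∧
    (∀ α : List Meth, α ≠ [] → HsReply eff yld s α = Reply.B →
      ∀ m : Meth, HsReply eff yld s (α ++ [m]) = Reply.B) ∧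
    (∀ α : List Meth, α ≠ [] →
      (HsReply eff yld s α ≠ Reply.M ↔ HsAction eff act tau s α = tau)) := by
  
  obtain ⟨d, hdB, hdeff⟩ := cond2
  refine ⟨?_, ?_, ?_⟩
  · rintro m ⟨α, hα⟩ α'
    rw [HsReply_concat] at hα ⊢
    exact cond1 m ⟨_, hα⟩ _
  · intro α hne hB m
    obtain ⟨β, m', rfl⟩ := List.eq_nil_or_concat α |>.resolve_left hne
    simp only [List.concat_eq_append] at hB ⊢
    rw [HsReply_concat] at hB
    rw [HsReply_concat]
    have : ceff eff s (β ++ [m']) = d := by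
      rw [ceff, List.foldl_append, ← ceff]
      exact hdeff _ _ hB
    rw [this]
    exact hdB m
  · intro α hne
    obtain ⟨β, m', rfl⟩ := List.eq_nil_or_concat α |>.resolve_left hne
    simp only [List.concat_eq_append]
    rw [HsReply_concat, HsAction_concat]
    exact cond3 _ _
end

section
/- The structural congruence relation on PGA programs is preserved by thread extraction on the generating defining clauses: for all n, and primitive instructions u₁,…,u_n, the thread extracted from #(n+1);u₁;…;u_n;#0 equals the thread extracted from #0;u₁;…;u_n;#0 (both equal D when followed by the same continuation), and the thread extracted from #(n+1);u₁;…;u_n;#m;x equals that of #(m+n+1);u₁;…;u_n;#m;x. -/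
/-- Primitive instructions of PGA. -/
inductive PGAInstr (A : Type) : Type
  | basic (a : A)
  | ptst (a : A)
  | ntst (a : A)
  | fjmp (l : ℕ)
  | halt

/-- In any thread model (`D` deadlock, `S` termination, `pcc` postconditional
composition), any thread extraction operator `ext` on instruction sequences
satisfying the defining equations of PGA thread extraction identifies the
generating pairs of the structural congruence:
`|#(n+1);u₁;…;u_n;#0| = |#0;u₁;…;u_n;#0|` (both equal `D`), and
`|#(n+1);u₁;…;u_n;#m;x| = |#(m+n+1);u₁;…;u_n;#m;x|`. -/
theorem thread_extraction_respects_structural_congruence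
    {A T : Type} (D S : T) (pcc : T → A → T → T)
    (ext : List (PGAInstr A) → T)
    (h_basic1 : ∀ a : A, ext [PGAInstr.basic a] = pcc D a D)
    (h_basic : ∀ (a : A) (x : List (PGAInstr A)), x ≠ [] →
      ext (PGAInstr.basic a :: x) = pcc (ext x) a (ext x))
    (h_ptst1 : ∀ a : A, ext [PGAInstr.ptst a] = pcc D a D)
    (h_ptst : ∀ (a : A) (x : List (PGAInstr A)), x ≠ [] →
      ext (PGAInstr.ptst a :: x) = pcc (ext x) a (ext (PGAInstr.fjmp 2 :: x)))
    (h_ntst1 : ∀ a : A, ext [PGAInstr.ntst a] = pcc D a D)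
    (h_ntst : ∀ (a : A) (x : List (PGAInstr A)), x ≠ [] →
      ext (PGAInstr.ntst a :: x) = pcc (ext (PGAInstr.fjmp 2 :: x)) a (ext x))
    (h_jmp1 : ∀ l : ℕ, ext [PGAInstr.fjmp l] = D)
    (h_jmp0 : ∀ x : List (PGAInstr A), x ≠ [] → ext (PGAInstr.fjmp 0 :: x) = D)
    (h_jmpS : ∀ x : List (PGAInstr A), x ≠ [] → ext (PGAInstr.fjmp 1 :: x) = ext x)
    (h_jmp2 : ∀ (l : ℕ) (u : PGAInstr A), ext [PGAInstr.fjmp (l + 2), u] = D)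
    (h_jmp : ∀ (l : ℕ) (u : PGAInstr A) (x : List (PGAInstr A)), x ≠ [] →
      ext (PGAInstr.fjmp (l + 2) :: u :: x) = ext (PGAInstr.fjmp (l + 1) :: x))
    (h_halt1 : ext [PGAInstr.halt] = S)
    (h_halt : ∀ x : List (PGAInstr A), x ≠ [] → ext (PGAInstr.halt :: x) = S)
    (n : ℕ) (us : List (PGAInstr A)) (h_len : us.length = n) :
    (ext (PGAInstr.fjmp (n + 1) :: us ++ [PGAInstr.fjmp 0])
        = ext (PGAInstr.fjmp 0 :: us ++ [PGAInstr.fjmp 0]) ∧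
      ext (PGAInstr.fjmp (n + 1) :: us ++ [PGAInstr.fjmp 0]) = D ∧
      ext (PGAInstr.fjmp 0 :: us ++ [PGAInstr.fjmp 0]) = D) ∧
    (∀ (m : ℕ) (x : List (PGAInstr A)),
      ext (PGAInstr.fjmp (n + 1) :: us ++ (PGAInstr.fjmp m :: x))
        = ext (PGAInstr.fjmp (m + n + 1) :: us ++ (PGAInstr.fjmp m :: x))) := by
  subst h_len
  -- key reduction lemma: a jump over `us` plus `k+1` reduces to jump `k+1` over `y`
  have key : ∀ (us y : List (PGAInstr A)) (k : ℕ), y ≠ [] →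
      ext (PGAInstr.fjmp (us.length + k + 1) :: us ++ y)
        = ext (PGAInstr.fjmp (k + 1) :: y) := by
    intro us
    induction us with
    | nil => intro y k hy; simp
    | cons u us ih =>
      intro y k hy
      have hne : us ++ y ≠ [] := by
        intro h
        exact hy (List.append_eq_nil_iff.mp h).2
      have h1 : us.length + 1 + k + 1 = (us.length + k) + 2 := by ring
      simp only [List.length_cons, List.cons_append, h1]
      rw [h_jmp _ u (us ++ y) hne]
      have h2 : us.length + k + 1 = us.length + k + 1 := rfl
      exact ih y k hy
  constructor
  · have hD : ext (PGAInstr.fjmp (us.length + 1) :: us ++ [PGAInstr.fjmp 0]) = D := by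
      have := key us [PGAInstr.fjmp 0] 0 (by simp)
      simp only [Nat.add_zero] at this
      rw [this, h_jmpS _ (by simp), h_jmp1]
    have hD0 : ext (PGAInstr.fjmp 0 :: us ++ [PGAInstr.fjmp 0]) = D :=
      h_jmp0 _ (by simp)
    exact ⟨hD.trans hD0.symm, hD, hD0⟩
  · intro m x
    have hL : ext (PGAInstr.fjmp (us.length + 1) :: us ++ (PGAInstr.fjmp m :: x))
        = ext (PGAInstr.fjmp 1 :: PGAInstr.fjmp m :: x) := by
      have := key us (PGAInstr.fjmp m :: x) 0 (by simp)
      simpa using this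
    have hR : ext (PGAInstr.fjmp (m + us.length + 1) :: us ++ (PGAInstr.fjmp m :: x))
        = ext (PGAInstr.fjmp (m + 1) :: PGAInstr.fjmp m :: x) := by
      have := key us (PGAInstr.fjmp m :: x) m (by simp)
      have h3 : us.length + m + 1 = m + us.length + 1 := by ring
      rw [h3] at this
      exact this
    rw [hL, hR]
    rcases x with _ | ⟨v, x⟩
    · -- x = []
      rw [h_jmpS _ (by simp), h_jmp1]
      rcases m with _ | m
      · rw [h_jmpS _ (by simp), h_jmp1]
      · exact (h_jmp2 m _).symm
    · -- x = v :: x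
      rw [h_jmpS _ (by simp)]
      rcases m with _ | m
      · rw [h_jmpS _ (by simp)]
      · exact (h_jmp (m) _ _ (by simp)).symm
end
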